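/- Let A, B ⊆ F be finite subsets of a field and G ⊆ A × B nonempty; fix 0 < ε < 1. Then there exist A' ⊆ A and H ⊆ A' × A' with |A'| ≥ c_ε|G|/|B| and |H| ≥ (1−ε)|A'|², such that |A' −_H A'| ≤ C_ε |A −_G B|²|A|²|B| / |G|², where A −_G B = {a−b : (a,b) ∈ G} and A' −_H A' = {a₁−a₂ : (a₁,a₂) ∈ H}. -/

import Mathlib

open scoped Classical

open Finset in
private lemma sum_fiber_card {F : Type} [Field F] (A B : Finset F) (G : Finset (F × F))
    (hG : G ⊆ A ×ˢ B) :
    ∑ b ∈ B, (A.filter fun a => (a, b) ∈ G).card = G.card := by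
  rw [Finset.card_eq_sum_card_fiberwise (f := Prod.snd) (t := B)
      (fun g hg => (Finset.mem_product.mp (hG hg)).2)]
  refine Finset.sum_congr rfl fun b hb => ?_
  apply Finset.card_bij (fun a _ => (a, b))
  · intro a ha
    simp only [mem_filter] at ha ⊢
    exact ⟨ha.2, trivial⟩
  · intro a1 h1 a2 h2 h
    exact (Prod.mk.injEq _ _ _ _ ▸ h).1
  · intro g hg
    simp only [mem_filter] at hg
    refine ⟨g.1, Finset.mem_filter.mpr ⟨(Finset.mem_product.mp (hG hg.1)).1, ?_⟩, ?_⟩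
    · rw [← hg.2]; exact hg.1
    · rw [← hg.2]

open Finset in
private lemma double_count {F : Type} [Field F] (A B : Finset F) (G : Finset (F × F)) (θ : ℝ) :
    ∑ b ∈ B, (((A.filter fun a => (a, b) ∈ G) ×ˢ (A.filter fun a => (a, b) ∈ G)).filter
        (fun p => ((B.filter fun y => (p.1, y) ∈ G ∧ (p.2, y) ∈ G).card : ℝ) < θ)).card
      = ∑ p ∈ (A ×ˢ A).filter
          (fun p => ((B.filter fun y => (p.1, y) ∈ G ∧ (p.2, y) ∈ G).card : ℝ) < θ),
          (B.filter fun y => (p.1, y) ∈ G ∧ (p.2, y) ∈ G).card := by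
  have h1 : ∀ b : F,
      ((A.filter fun a => (a, b) ∈ G) ×ˢ (A.filter fun a => (a, b) ∈ G)).filter
        (fun p => ((B.filter fun y => (p.1, y) ∈ G ∧ (p.2, y) ∈ G).card : ℝ) < θ)
      = (A ×ˢ A).filter (fun p =>
          (((B.filter fun y => (p.1, y) ∈ G ∧ (p.2, y) ∈ G).card : ℝ) < θ)
          ∧ ((p.1, b) ∈ G ∧ (p.2, b) ∈ G)) := by
    intro b
    ext p
    simp only [mem_filter, mem_product]
    tauto
  calc ∑ b ∈ B, (((A.filter fun a => (a, b) ∈ G) ×ˢ (A.filter fun a => (a, b) ∈ G)).filter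
        (fun p => ((B.filter fun y => (p.1, y) ∈ G ∧ (p.2, y) ∈ G).card : ℝ) < θ)).card
      = ∑ b ∈ B, ∑ p ∈ A ×ˢ A,
          if (((B.filter fun y => (p.1, y) ∈ G ∧ (p.2, y) ∈ G).card : ℝ) < θ)
             ∧ ((p.1, b) ∈ G ∧ (p.2, b) ∈ G) then 1 else 0 := by
        refine Finset.sum_congr rfl fun b _ => ?_
        rw [h1 b, Finset.card_filter]
    _ = ∑ p ∈ A ×ˢ A, ∑ b ∈ B,
          if (((B.filter fun y => (p.1, y) ∈ G ∧ (p.2, y) ∈ G).card : ℝ) < θ)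
             ∧ ((p.1, b) ∈ G ∧ (p.2, b) ∈ G) then 1 else 0 := Finset.sum_comm
    _ = ∑ p ∈ A ×ˢ A,
          if (((B.filter fun y => (p.1, y) ∈ G ∧ (p.2, y) ∈ G).card : ℝ) < θ)
          then (B.filter fun y => (p.1, y) ∈ G ∧ (p.2, y) ∈ G).card else 0 := by
        refine Finset.sum_congr rfl fun p _ => ?_
        by_cases hp : ((B.filter fun y => (p.1, y) ∈ G ∧ (p.2, y) ∈ G).card : ℝ) < θ
        · simp only [hp, true_and, if_true]; rw [Finset.card_filter]
        · simp [hp]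
    _ = _ := by rw [Finset.sum_filter]

open Finset in
private lemma diff_count {F : Type} [Field F] (B : Finset F) (G : Finset (F × F))
    (H : Finset (F × F)) (θ : ℝ)
    (hH : ∀ p ∈ H, θ ≤ ((B.filter fun y => (p.1, y) ∈ G ∧ (p.2, y) ∈ G).card : ℝ)) :
    θ * ((H.image fun p => p.1 - p.2).card : ℝ)
      ≤ ((G.image fun g => g.1 - g.2).card : ℝ) ^ 2 := by
  set V := H.image fun p => p.1 - p.2 with hV
  set pv : F → F × F := fun v =>
    if h : ∃ p, p ∈ H ∧ p.1 - p.2 = v then h.choose else (0, 0) with hpvdef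
  have hpv : ∀ v ∈ V, pv v ∈ H ∧ (pv v).1 - (pv v).2 = v := by
    intro v hv
    rw [hV, Finset.mem_image] at hv
    obtain ⟨p, hp, hpe⟩ := hv
    have h : ∃ p, p ∈ H ∧ p.1 - p.2 = v := ⟨p, hp, hpe⟩
    rw [hpvdef]
    simp only [dif_pos h]
    exact h.choose_spec
  set CN : F × F → Finset F := fun p => B.filter fun y => (p.1, y) ∈ G ∧ (p.2, y) ∈ G with hCN
  set W := V.biUnion fun v => (CN (pv v)).image fun y => ((pv v).1 - y, (pv v).2 - y) with hW
  have hdisj : ∀ v1 ∈ V, ∀ v2 ∈ V, v1 ≠ v2 →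
      Disjoint ((CN (pv v1)).image fun y => ((pv v1).1 - y, (pv v1).2 - y))
        ((CN (pv v2)).image fun y => ((pv v2).1 - y, (pv v2).2 - y)) := by
    intro v1 h1 v2 h2 hne
    rw [Finset.disjoint_left]
    intro q hq1 hq2
    rw [Finset.mem_image] at hq1 hq2
    obtain ⟨y1, _, he1⟩ := hq1
    obtain ⟨y2, _, he2⟩ := hq2
    apply hne
    have e1 : q.1 - q.2 = v1 := by
      rw [← he1]; simp only []
      rw [sub_sub_sub_cancel_right]; exact (hpv v1 h1).2
    have e2 : q.1 - q.2 = v2 := by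
      rw [← he2]; simp only []
      rw [sub_sub_sub_cancel_right]; exact (hpv v2 h2).2
    rw [← e1, e2]
  have hWcard : W.card = ∑ v ∈ V, (CN (pv v)).card := by
    rw [hW, Finset.card_biUnion hdisj]
    refine Finset.sum_congr rfl fun v _ => ?_
    apply Finset.card_image_of_injective
    intro y1 y2 h
    have := congrArg Prod.fst h
    simp only at this
    exact sub_right_injective this
  have hWsub : W ⊆ (G.image fun g => g.1 - g.2) ×ˢ (G.image fun g => g.1 - g.2) := by
    intro q hq
    rw [hW, Finset.mem_biUnion] at hq
    obtain ⟨v, hv, hq⟩ := hq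
    rw [Finset.mem_image] at hq
    obtain ⟨y, hy, he⟩ := hq
    rw [hCN, Finset.mem_filter] at hy
    rw [Finset.mem_product, ← he]
    constructor
    · exact Finset.mem_image.mpr ⟨((pv v).1, y), hy.2.1, rfl⟩
    · exact Finset.mem_image.mpr ⟨((pv v).2, y), hy.2.2, rfl⟩
  have hub : (W.card : ℝ) ≤ ((G.image fun g => g.1 - g.2).card : ℝ) ^ 2 := by
    have := Finset.card_le_card hWsub
    rw [Finset.card_product] at this
    calc (W.card : ℝ) ≤ _ := Nat.cast_le.mpr this
    _ = ((G.image fun g => g.1 - g.2).card : ℝ) ^ 2 := by push_cast; ring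
  have hlb : θ * (V.card : ℝ) ≤ (W.card : ℝ) := by
    rw [hWcard]
    push_cast
    calc θ * (V.card : ℝ) = ∑ _v ∈ V, θ := by rw [Finset.sum_const, nsmul_eq_mul, mul_comm]
    _ ≤ ∑ v ∈ V, ((CN (pv v)).card : ℝ) :=
        Finset.sum_le_sum fun v hv => hH _ (hpv v hv).1
  exact hlb.trans hub

set_option maxHeartbeats 2000000 in
theorem stmt9 (ε : ℝ) (hε : 0 < ε) (hε1 : ε < 1) :
    ∃ cε Cε : ℝ, 0 < cε ∧ 0 < Cε ∧
      ∀ (F : Type) [Field F], ∀ (A B : Finset F) (G : Finset (F × F)),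
        G ⊆ A ×ˢ B → G.Nonempty →
        ∃ A' ⊆ A, ∃ H ⊆ A' ×ˢ A',
          cε * (G.card : ℝ) / (B.card : ℝ) ≤ (A'.card : ℝ) ∧
          (1 - ε) * (A'.card : ℝ) ^ 2 ≤ (H.card : ℝ) ∧
          ((H.image fun q => q.1 - q.2).card : ℝ) ≤
            Cε * ((G.image fun g => g.1 - g.2).card : ℝ) ^ 2 * (A.card : ℝ) ^ 2 *
              (B.card : ℝ) / (G.card : ℝ) ^ 2 := by
  refine ⟨1/4, 2/ε, by norm_num, by positivity, ?_⟩
  intro F _ A B G hG hGne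
  obtain ⟨g0, hg0⟩ := hGne
  have hg0' := Finset.mem_product.mp (hG hg0)
  have hE : 0 < G.card := Finset.card_pos.mpr ⟨g0, hg0⟩
  have hAc : 0 < A.card := Finset.card_pos.mpr ⟨g0.1, hg0'.1⟩
  have hBc : 0 < B.card := Finset.card_pos.mpr ⟨g0.2, hg0'.2⟩
  have hEr : (0 : ℝ) < G.card := by exact_mod_cast hE
  have hAr : (0 : ℝ) < A.card := by exact_mod_cast hAc
  have hBr : (0 : ℝ) < B.card := by exact_mod_cast hBc
  set θ : ℝ := ε * (G.card : ℝ) ^ 2 / (2 * (B.card : ℝ) * (A.card : ℝ) ^ 2) with hθdef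
  have hθ : 0 < θ := by rw [hθdef]; positivity
  -- notation
  set Ab : F → Finset F := fun b => A.filter fun a => (a, b) ∈ G with hAb
  set bad : F → Finset (F × F) := fun b => ((Ab b) ×ˢ (Ab b)).filter
      (fun p => ((B.filter fun y => (p.1, y) ∈ G ∧ (p.2, y) ∈ G).card : ℝ) < θ) with hbad
  -- Cauchy–Schwarz
  have hsum : ∑ b ∈ B, ((Ab b).card : ℝ) = (G.card : ℝ) := by
    rw [← sum_fiber_card A B G hG]; push_cast; rfl
  have hCS : ((G.card : ℝ)) ^ 2 / (B.card : ℝ) ≤ ∑ b ∈ B, ((Ab b).card : ℝ) ^ 2 := by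
    rw [div_le_iff₀ hBr]
    calc ((G.card : ℝ)) ^ 2 = (∑ b ∈ B, ((Ab b).card : ℝ)) ^ 2 := by rw [hsum]
    _ ≤ (B.card : ℝ) * ∑ b ∈ B, ((Ab b).card : ℝ) ^ 2 := by
        have := sq_sum_le_card_mul_sum_sq (s := B) (f := fun b => ((Ab b).card : ℝ))
        exact_mod_cast this
    _ = (∑ b ∈ B, ((Ab b).card : ℝ) ^ 2) * (B.card : ℝ) := by ring
  -- bad sum bound
  have hbadsum : ∑ b ∈ B, ((bad b).card : ℝ) ≤ θ * (A.card : ℝ) ^ 2 := by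
    have hdc := double_count A B G θ
    have hcast : ∑ b ∈ B, ((bad b).card : ℝ)
        = ∑ p ∈ (A ×ˢ A).filter
            (fun p => ((B.filter fun y => (p.1, y) ∈ G ∧ (p.2, y) ∈ G).card : ℝ) < θ),
            ((B.filter fun y => (p.1, y) ∈ G ∧ (p.2, y) ∈ G).card : ℝ) := by
      rw [← Nat.cast_sum, ← Nat.cast_sum, hbad]
      norm_cast
    rw [hcast]
    set S := (A ×ˢ A).filter
        (fun p => ((B.filter fun y => (p.1, y) ∈ G ∧ (p.2, y) ∈ G).card : ℝ) < θ) with hS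
    calc ∑ p ∈ S, ((B.filter fun y => (p.1, y) ∈ G ∧ (p.2, y) ∈ G).card : ℝ)
        ≤ ∑ p ∈ S, θ := Finset.sum_le_sum fun p hp =>
          le_of_lt (Finset.mem_filter.mp hp).2
      _ = S.card * θ := by rw [Finset.sum_const, nsmul_eq_mul]
      _ ≤ (A.card : ℝ) ^ 2 * θ := by
          have h1 : S.card ≤ A.card * A.card := by
            calc S.card ≤ (A ×ˢ A).card := Finset.card_le_card (Finset.filter_subset _ _)
            _ = A.card * A.card := Finset.card_product _ _
          have h2 : (S.card : ℝ) ≤ (A.card : ℝ) ^ 2 := by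
            have := (Nat.cast_le (α := ℝ)).mpr h1
            push_cast at this
            nlinarith
          exact mul_le_mul_of_nonneg_right h2 hθ.le
      _ = θ * (A.card : ℝ) ^ 2 := by ring
  -- existence of good b
  have hgood : ∃ b ∈ B, (1/4 : ℝ) * (G.card : ℝ) / (B.card : ℝ) ≤ ((Ab b).card : ℝ) ∧
      ((bad b).card : ℝ) ≤ ε * ((Ab b).card : ℝ) ^ 2 := by
    by_contra hcon
    push_neg at hcon
    have hper : ∀ b ∈ B, ε * ((Ab b).card : ℝ) ^ 2
        ≤ ((bad b).card : ℝ) + ε * ((G.card : ℝ) / (4 * B.card)) * ((Ab b).card : ℝ) := by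
      intro b hb
      by_cases hP : (1/4 : ℝ) * (G.card : ℝ) / (B.card : ℝ) ≤ ((Ab b).card : ℝ)
      · have := hcon b hb hP
        have hnn : (0:ℝ) ≤ ε * ((G.card : ℝ) / (4 * B.card)) * ((Ab b).card : ℝ) := by positivity
        linarith
      · push_neg at hP
        have hr : (0:ℝ) ≤ ((Ab b).card : ℝ) := Nat.cast_nonneg _
        have hb1 : ((Ab b).card : ℝ) ≤ (G.card : ℝ) / (4 * B.card) := by
          have heq : (1/4 : ℝ) * (G.card : ℝ) / (B.card : ℝ) = (G.card : ℝ) / (4 * B.card) := by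
            field_simp <;> ring
          linarith [heq ▸ hP]
        have hbadnn : (0:ℝ) ≤ ((bad b).card : ℝ) := Nat.cast_nonneg _
        have key : ε * (((Ab b).card : ℝ) * ((Ab b).card : ℝ))
            ≤ ε * (((G.card : ℝ) / (4 * B.card)) * ((Ab b).card : ℝ)) :=
          mul_le_mul_of_nonneg_left (mul_le_mul_of_nonneg_right hb1 hr) hε.le
        nlinarith [key, hbadnn]
    have hsum2 : ε * ((G.card : ℝ)) ^ 2 / (B.card : ℝ)
        ≤ θ * (A.card : ℝ) ^ 2 + ε * ((G.card : ℝ) / (4 * B.card)) * (G.card : ℝ) := by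
      calc ε * ((G.card : ℝ)) ^ 2 / (B.card : ℝ)
          = ε * (((G.card : ℝ)) ^ 2 / (B.card : ℝ)) := by ring
        _ ≤ ε * ∑ b ∈ B, ((Ab b).card : ℝ) ^ 2 := by
            exact mul_le_mul_of_nonneg_left hCS hε.le
        _ = ∑ b ∈ B, ε * ((Ab b).card : ℝ) ^ 2 := by rw [Finset.mul_sum]
        _ ≤ ∑ b ∈ B, (((bad b).card : ℝ) + ε * ((G.card : ℝ) / (4 * B.card)) * ((Ab b).card : ℝ)) :=
            Finset.sum_le_sum hper
        _ = (∑ b ∈ B, ((bad b).card : ℝ))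
            + ε * ((G.card : ℝ) / (4 * B.card)) * ∑ b ∈ B, ((Ab b).card : ℝ) := by
            rw [Finset.sum_add_distrib, Finset.mul_sum]
        _ ≤ θ * (A.card : ℝ) ^ 2 + ε * ((G.card : ℝ) / (4 * B.card)) * (G.card : ℝ) := by
            rw [hsum]; exact add_le_add hbadsum le_rfl
    have hθA : θ * (A.card : ℝ) ^ 2 = ε * (G.card : ℝ) ^ 2 / (2 * B.card) := by
      rw [hθdef]; field_simp <;> ring
    rw [hθA] at hsum2
    have hx : (0:ℝ) < ε * (G.card : ℝ) ^ 2 / (B.card : ℝ) := by positivity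
    have : ε * ((G.card : ℝ) / (4 * B.card)) * (G.card : ℝ)
        = ε * (G.card : ℝ) ^ 2 / (B.card : ℝ) / 4 := by field_simp <;> ring
    rw [this] at hsum2
    have : ε * (G.card : ℝ) ^ 2 / (2 * B.card) = ε * (G.card : ℝ) ^ 2 / (B.card : ℝ) / 2 := by
      field_simp <;> ring
    rw [this] at hsum2
    linarith
  obtain ⟨b, hbB, hb1, hb2⟩ := hgood
  refine ⟨Ab b, Finset.filter_subset _ _, ((Ab b) ×ˢ (Ab b)).filter
      (fun p => ¬ (((B.filter fun y => (p.1, y) ∈ G ∧ (p.2, y) ∈ G).card : ℝ) < θ)),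
      Finset.filter_subset _ _, hb1, ?_, ?_⟩
  · -- H card lower bound
    have hsplit := Finset.card_filter_add_card_filter_not
      (s := (Ab b) ×ˢ (Ab b))
      (p := fun p => ((B.filter fun y => (p.1, y) ∈ G ∧ (p.2, y) ∈ G).card : ℝ) < θ)
    have hprod : (((Ab b) ×ˢ (Ab b)).card : ℝ) = ((Ab b).card : ℝ) ^ 2 := by
      rw [Finset.card_product]; push_cast; ring
    have : ((((Ab b) ×ˢ (Ab b)).filter
        (fun p => ¬ (((B.filter fun y => (p.1, y) ∈ G ∧ (p.2, y) ∈ G).card : ℝ) < θ))).card : ℝ)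
        = ((Ab b).card : ℝ) ^ 2 - ((bad b).card : ℝ) := by
      rw [← hprod, hbad]
      have := congrArg (fun n : ℕ => (n : ℝ)) hsplit
      push_cast at this
      linarith
    rw [this]
    nlinarith [hb2]
  · -- difference bound
    have hdc := diff_count B G (((Ab b) ×ˢ (Ab b)).filter
      (fun p => ¬ (((B.filter fun y => (p.1, y) ∈ G ∧ (p.2, y) ∈ G).card : ℝ) < θ))) θ
      (fun p hp => not_lt.mp (Finset.mem_filter.mp hp).2)
    set X := (((((Ab b) ×ˢ (Ab b)).filter
      (fun p => ¬ (((B.filter fun y => (p.1, y) ∈ G ∧ (p.2, y) ∈ G).card : ℝ) < θ))).image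
        fun q => q.1 - q.2).card : ℝ)
    set D := ((G.image fun g => g.1 - g.2).card : ℝ) with hD
    have hXD : X ≤ D ^ 2 / θ := by
      rw [le_div_iff₀ hθ]
      calc X * θ = θ * X := mul_comm _ _
      _ ≤ D ^ 2 := hdc
    calc X ≤ D ^ 2 / θ := hXD
    _ = 2 / ε * D ^ 2 * (A.card : ℝ) ^ 2 * (B.card : ℝ) / (G.card : ℝ) ^ 2 := by
        rw [hθdef]
        field_simp <;> ring
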